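/- The capacity of the D-dimensional isotropic axial product of the ODD constraint equals 1/2, for all positive integers D. In particular, lim_{n→∞} (log_2 N_D(n)) / n^D = 1/2, where N_D(n) is the number of binary n×n×...×n (D-dimensional) arrays all of whose axis-parallel rows satisfy ODD. -/

import Mathlib

open Filter

/-- A binary word satisfies the ODD constraint if the number of 0's between any
two consecutive 1's is odd. -/
def OddWord {n : ℕ} (w : Fin n → Bool) : Prop :=
  ∀ i j : Fin n, i < j → w i = true → w j = true →
    (∀ k : Fin n, i < k → k < j → w k = false) → Odd ((j : ℕ) - (i : ℕ) - 1)

/-- `OddCube D n` is the number of binary `D`-dimensional `n × ⋯ × n` arrays all of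
whose axis-parallel rows satisfy the ODD constraint. -/
noncomputable def OddCube (D n : ℕ) : ℕ :=
  Nat.card {Γ : (Fin D → Fin n) → Bool //
    ∀ (i : Fin D) (x : Fin D → Fin n),
      OddWord (fun t : Fin n => Γ (Function.update x i t))}

/-- A word satisfies ODD iff all of its 1's occur at positions of the same parity. -/
lemma oddWord_iff {n : ℕ} (w : Fin n → Bool) :
    OddWord w ↔ ∀ i j : Fin n, w i = true → w j = true → (i : ℕ) % 2 = (j : ℕ) % 2 := by
  constructor
  · intro hw
    have key : ∀ d : ℕ, ∀ i j : Fin n, (j : ℕ) - (i : ℕ) = d → i < j → w i = true → w j = true →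
        (i : ℕ) % 2 = (j : ℕ) % 2 := by
      intro d
      induction d using Nat.strong_induction_on with
      | _ d IH =>
        intro i j hd hij hwi hwj
        have hij' : (i : ℕ) < (j : ℕ) := hij
        by_cases hk : ∃ k : Fin n, i < k ∧ k < j ∧ w k = true
        · obtain ⟨k, hik, hkj, hwk⟩ := hk
          have hik' : (i : ℕ) < (k : ℕ) := hik
          have hkj' : (k : ℕ) < (j : ℕ) := hkj
          have h1 := IH ((k : ℕ) - (i : ℕ)) (by omega) i k rfl hik hwi hwk
          have h2 := IH ((j : ℕ) - (k : ℕ)) (by omega) k j rfl hkj hwk hwj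
          omega
        · push_neg at hk
          have hodd := hw i j hij hwi hwj (fun k h1 h2 => by
            have := hk k h1 h2
            simpa using this)
          rw [Nat.odd_iff] at hodd
          omega
    intro i j hwi hwj
    rcases lt_trichotomy i j with h | h | h
    · exact key _ i j rfl h hwi hwj
    · rw [h]
    · exact (key _ j i rfl h hwj hwi).symm
  · intro hp i j hij hwi hwj _
    have := hp i j hwi hwj
    have hij' : (i : ℕ) < (j : ℕ) := hij
    rw [Nat.odd_iff]
    omega

lemma sum_update_val {D n : ℕ} (x : Fin D → Fin n) (i : Fin D) (t : Fin n) :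
    (∑ j, ((Function.update x i t j : ℕ))) = (t : ℕ) + ∑ j ∈ Finset.univ \ {i}, ((x j : ℕ)) := by
  have h : (fun j => ((Function.update x i t j : ℕ)))
      = Function.update (fun j => ((x j : ℕ))) i ((t : ℕ)) := by
    funext j
    simp [Function.update, Fin.val_eq_val]
    split <;> simp_all
  calc (∑ j, ((Function.update x i t j : ℕ)))
      = ∑ j, Function.update (fun j => ((x j : ℕ))) i ((t : ℕ)) j := by rw [h]
    _ = (t : ℕ) + ∑ j ∈ Finset.univ \ {i}, ((x j : ℕ)) :=
        Finset.sum_update_of_mem (Finset.mem_univ i) _ _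

/-- If the support of `Γ` consists of cells of even coordinate-sum, all rows satisfy ODD. -/
lemma rows_odd_of_parity {D n : ℕ} (Γ : (Fin D → Fin n) → Bool)
    (h : ∀ x, Γ x = true → (∑ j, ((x j : ℕ))) % 2 = 0)
    (i : Fin D) (x : Fin D → Fin n) :
    OddWord (fun t : Fin n => Γ (Function.update x i t)) := by
  rw [oddWord_iff]
  intro t1 t2 h1 h2
  have e1 := h _ h1
  have e2 := h _ h2
  rw [sum_update_val] at e1 e2
  omega

lemma oddCube_lower (d n : ℕ) : 2 ^ ((n / 2) * n ^ d) ≤ OddCube (d + 1) n := by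
  classical
  set m := n / 2 with hm
  have hinj : ∃ f : ((Fin m × (Fin d → Fin n)) → Bool) →
      {Γ : (Fin (d+1) → Fin n) → Bool //
        ∀ (i : Fin (d+1)) (x : Fin (d+1) → Fin n),
          OddWord (fun t : Fin n => Γ (Function.update x i t))}, Function.Injective f := by
    refine ⟨fun f => ⟨fun x =>
      if h : ((x 0 : ℕ)) % 2 = (∑ j, ((Fin.tail x j : ℕ))) % 2 ∧ (x 0 : ℕ) / 2 < m
      then f (⟨(x 0 : ℕ) / 2, h.2⟩, Fin.tail x) else false, ?_⟩, ?_⟩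
    · have hpar : ∀ x : Fin (d+1) → Fin n,
          (if h : ((x 0 : ℕ)) % 2 = (∑ j, ((Fin.tail x j : ℕ))) % 2 ∧ (x 0 : ℕ) / 2 < m
           then f (⟨(x 0 : ℕ) / 2, h.2⟩, Fin.tail x) else false) = true →
          (∑ j, ((x j : ℕ))) % 2 = 0 := ?_
      · exact rows_odd_of_parity _ hpar
      intro x hx
      by_cases h : ((x 0 : ℕ)) % 2 = (∑ j, ((Fin.tail x j : ℕ))) % 2 ∧ (x 0 : ℕ) / 2 < m
      · rw [Fin.sum_univ_succ]
        have h1 : ((x 0 : ℕ)) % 2 = (∑ j : Fin d, ((x j.succ : ℕ))) % 2 := h.1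
        omega
      · rw [dif_neg h] at hx
        exact absurd hx (by simp)
    · intro f1 f2 hf
      funext p
      obtain ⟨k, y⟩ := p
      set s : ℕ := (∑ j, ((y j : ℕ))) % 2 with hs
      have hklt : (k : ℕ) < m := k.isLt
      have ht : 2 * (k : ℕ) + s < n := by
        have : s < 2 := Nat.mod_lt _ (by norm_num)
        omega
      set t0 : Fin n := ⟨2 * (k : ℕ) + s, ht⟩ with ht0
      have hval := congrFun (congrArg Subtype.val hf) (Fin.cons t0 y)
      simp only [Fin.cons_zero, Fin.tail_cons] at hval
      have hcond : ((t0 : ℕ)) % 2 = (∑ j, ((y j : ℕ))) % 2 ∧ (t0 : ℕ) / 2 < m := by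
        constructor
        · show (2 * (k : ℕ) + s) % 2 = _
          omega
        · show (2 * (k : ℕ) + s) / 2 < m
          omega
      rw [dif_pos hcond, dif_pos hcond] at hval
      have hfin : (⟨(t0 : ℕ) / 2, hcond.2⟩ : Fin m) = k := by
        apply Fin.ext
        show (2 * (k : ℕ) + s) / 2 = (k : ℕ)
        omega
      rwa [hfin] at hval
  obtain ⟨f, hf⟩ := hinj
  calc 2 ^ (m * n ^ d) = Nat.card ((Fin m × (Fin d → Fin n)) → Bool) := by
        simp [Nat.card_eq_fintype_card]
    _ ≤ OddCube (d + 1) n := Nat.card_le_card_of_injective f hf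

open scoped Classical in
/-- The common parity of the 1's of a word. -/
noncomputable def wordPar {n : ℕ} (w : Fin n → Bool) : ℕ :=
  if ∃ i, w i = true ∧ (i : ℕ) % 2 = 1 then 1 else 0

lemma wordPar_lt {n : ℕ} (w : Fin n → Bool) : wordPar w < 2 := by
  unfold wordPar; split <;> omega

lemma ones_wordPar {n : ℕ} {w : Fin n → Bool} (hw : OddWord w) :
    ∀ i, w i = true → (i : ℕ) % 2 = wordPar w := by
  classical
  intro i hi
  unfold wordPar
  split
  · next h =>
    obtain ⟨j, hj, hj2⟩ := h
    rw [(oddWord_iff w).mp hw i j hi hj]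
    exact hj2
  · next h =>
    push_neg at h
    have := h i hi
    omega

lemma card_oddWords_le (n : ℕ) :
    Nat.card {w : Fin n → Bool // OddWord w} ≤ 2 ^ ((n + 1) / 2 + 1) := by
  classical
  have hinj : Function.Injective (fun w : {w : Fin n → Bool // OddWord w} =>
      ((⟨wordPar w.1, wordPar_lt w.1⟩ : Fin 2),
        fun k : Fin ((n + 1) / 2) =>
          if h : 2 * (k : ℕ) + wordPar w.1 < n then w.1 ⟨2 * (k : ℕ) + wordPar w.1, h⟩
          else false)) := by
    intro w1 w2 h
    have h1 : wordPar w1.1 = wordPar w2.1 := by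
      have := congrArg Prod.fst h
      simpa [Fin.ext_iff] using this
    have h2 := congrArg Prod.snd h
    simp only at h2
    apply Subtype.ext
    funext i
    by_cases hp : (i : ℕ) % 2 = wordPar w1.1
    · have hi2 : (i : ℕ) / 2 < (n + 1) / 2 := by have := i.isLt; omega
      have hlt : 2 * ((i : ℕ) / 2) + wordPar w1.1 < n := by
        have := i.isLt; have := wordPar_lt w1.1; omega
      have heq : (⟨2 * ((i : ℕ) / 2) + wordPar w1.1, hlt⟩ : Fin n) = i := by
        apply Fin.ext; simp only; have := wordPar_lt w1.1; omega
      have hk := congrFun h2 ⟨(i : ℕ) / 2, hi2⟩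
      simp only at hk
      rw [dif_pos hlt] at hk
      have hlt2 : 2 * ((i : ℕ) / 2) + wordPar w2.1 < n := by rw [← h1]; exact hlt
      rw [dif_pos hlt2] at hk
      have heq2 : (⟨2 * ((i : ℕ) / 2) + wordPar w2.1, hlt2⟩ : Fin n) = i := by
        apply Fin.ext; simp only; have := wordPar_lt w1.1; omega
      have g1 : w1.1 i = w1.1 ⟨2 * ((i : ℕ) / 2) + wordPar w1.1, hlt⟩ := by rw [heq]
      have g2 : w2.1 i = w2.1 ⟨2 * ((i : ℕ) / 2) + wordPar w2.1, hlt2⟩ := by rw [heq2]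
      rw [g1, g2]
      exact hk
    · have e1 : w1.1 i = false := by
        by_contra hc
        have : w1.1 i = true := by simpa using hc
        exact hp (ones_wordPar w1.2 i this)
      have e2 : w2.1 i = false := by
        by_contra hc
        have : w2.1 i = true := by simpa using hc
        rw [h1] at hp
        exact hp (ones_wordPar w2.2 i this)
      rw [e1, e2]
  calc Nat.card {w : Fin n → Bool // OddWord w}
      ≤ Nat.card (Fin 2 × (Fin ((n + 1) / 2) → Bool)) :=
        Nat.card_le_card_of_injective _ hinj
    _ = 2 ^ ((n + 1) / 2 + 1) := by
        simp [Nat.card_eq_fintype_card, pow_succ, mul_comm]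

lemma row_cons {d n : ℕ} (Γ : (Fin (d + 1) → Fin n) → Bool)
    (hΓ : ∀ (i : Fin (d + 1)) (x : Fin (d + 1) → Fin n),
      OddWord (fun t : Fin n => Γ (Function.update x i t)))
    (y : Fin d → Fin n) : OddWord (fun t => Γ (Fin.cons t y)) := by
  rcases Nat.eq_zero_or_pos n with h | h
  · subst h; intro i; exact i.elim0
  · have := hΓ 0 (Fin.cons ⟨0, h⟩ y)
    simpa [Fin.update_cons_zero] using this

lemma oddCube_upper (d n : ℕ) : OddCube (d + 1) n ≤ 2 ^ (((n + 1) / 2 + 1) * n ^ d) := by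
  classical
  have step1 : OddCube (d + 1) n ≤
      Nat.card ((Fin d → Fin n) → {w : Fin n → Bool // OddWord w}) := by
    apply Nat.card_le_card_of_injective
      (fun Γ : {Γ : (Fin (d+1) → Fin n) → Bool //
          ∀ (i : Fin (d+1)) (x : Fin (d+1) → Fin n),
            OddWord (fun t : Fin n => Γ (Function.update x i t))} =>
        fun y => (⟨fun t => Γ.1 (Fin.cons t y), row_cons Γ.1 Γ.2 y⟩ :
          {w : Fin n → Bool // OddWord w}))
    intro Γ1 Γ2 h
    apply Subtype.ext
    funext x
    have := congrFun (congrArg Subtype.val (congrFun h (Fin.tail x))) (x 0)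
    simpa [Fin.cons_self_tail] using this
  have step2 : Nat.card ((Fin d → Fin n) → {w : Fin n → Bool // OddWord w})
      = (Nat.card {w : Fin n → Bool // OddWord w}) ^ (n ^ d) := by
    rw [Nat.card_fun]
    congr 1
    simp [Nat.card_eq_fintype_card]
  have step3 : (Nat.card {w : Fin n → Bool // OddWord w}) ^ (n ^ d)
      ≤ (2 ^ ((n + 1) / 2 + 1)) ^ (n ^ d) :=
    Nat.pow_le_pow_left (card_oddWords_le n) _
  calc OddCube (d + 1) n ≤ _ := step1
    _ = _ := step2
    _ ≤ _ := step3
    _ = 2 ^ (((n + 1) / 2 + 1) * n ^ d) := (pow_mul 2 _ _).symm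

lemma logb_two_pow (a : ℕ) : Real.logb 2 ((2 : ℝ) ^ a) = a := by
  rw [Real.logb_pow, Real.logb_self_eq_one (by norm_num)]
  ring

/-- The capacity of the `D`-dimensional isotropic axial product of the ODD
constraint equals `1/2`: `lim_{n→∞} log₂(OddCube D n) / n^D = 1/2`. -/
theorem stmt6 (D : ℕ) (hD : 0 < D) :
    Tendsto (fun n : ℕ => Real.logb 2 (OddCube D n) / (n : ℝ) ^ D)
      atTop (nhds (1 / 2)) := by
  obtain ⟨d, rfl⟩ : ∃ d, D = d + 1 := ⟨D - 1, by omega⟩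
  have h0 : Tendsto (fun n : ℕ => 2 / (n : ℝ)) atTop (nhds 0) :=
    tendsto_const_div_atTop_nhds_zero_nat 2
  apply tendsto_of_tendsto_of_tendsto_of_le_of_le'
    (g := fun n : ℕ => 1 / 2 - 2 / (n : ℝ)) (h := fun n : ℕ => 1 / 2 + 2 / (n : ℝ))
  · simpa using tendsto_const_nhds.sub h0
  · simpa using tendsto_const_nhds.add h0
  · filter_upwards [eventually_ge_atTop 1] with n hn
    have hn' : (1 : ℝ) ≤ (n : ℝ) := by exact_mod_cast hn
    have hn0 : (0 : ℝ) < (n : ℝ) := by linarith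
    have hl := oddCube_lower d n
    have hN : (2 : ℝ) ^ ((n / 2) * n ^ d) ≤ ((OddCube (d + 1) n : ℕ) : ℝ) := by
      exact_mod_cast hl
    have hNpos : (0 : ℝ) < ((OddCube (d + 1) n : ℕ) : ℝ) :=
      lt_of_lt_of_le (pow_pos two_pos _) hN
    have l1 : (((n / 2) * n ^ d : ℕ) : ℝ) ≤ Real.logb 2 (OddCube (d + 1) n) := by
      have := Real.logb_le_logb_of_le (by norm_num : (1:ℝ) < 2)
        (pow_pos two_pos ((n / 2) * n ^ d)) hN
      rwa [logb_two_pow] at this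
    have key : (1 : ℝ) / 2 - 2 / (n : ℝ) ≤ (((n / 2) * n ^ d : ℕ) : ℝ) / (n : ℝ) ^ (d + 1) := by
      have hq : ((n : ℝ)) ≤ 2 * ((n / 2 : ℕ) : ℝ) + 1 := by
        exact_mod_cast (by omega : n ≤ 2 * (n / 2) + 1)
      have hpd : (0 : ℝ) < (n : ℝ) ^ d := pow_pos hn0 d
      push_cast
      rw [pow_succ]
      have e : ((n / 2 : ℕ) : ℝ) * (n : ℝ) ^ d / ((n : ℝ) ^ d * n) = ((n / 2 : ℕ) : ℝ) / n := by
        rw [mul_comm ((n / 2 : ℕ) : ℝ) ((n : ℝ) ^ d)]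
        exact mul_div_mul_left _ _ (ne_of_gt hpd)
      rw [e, sub_le_iff_le_add, ← add_div, le_div_iff₀ hn0]
      linarith
    calc (1 : ℝ) / 2 - 2 / (n : ℝ) ≤ (((n / 2) * n ^ d : ℕ) : ℝ) / (n : ℝ) ^ (d + 1) := key
      _ ≤ Real.logb 2 (OddCube (d + 1) n) / (n : ℝ) ^ (d + 1) := by
          gcongr
  · filter_upwards [eventually_ge_atTop 1] with n hn
    have hn' : (1 : ℝ) ≤ (n : ℝ) := by exact_mod_cast hn
    have hn0 : (0 : ℝ) < (n : ℝ) := by linarith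
    have hu := oddCube_upper d n
    have hN2 : ((OddCube (d + 1) n : ℕ) : ℝ) ≤ (2 : ℝ) ^ (((n + 1) / 2 + 1) * n ^ d) := by
      exact_mod_cast hu
    have hNpos : (0 : ℝ) < ((OddCube (d + 1) n : ℕ) : ℝ) := by
      have hl := oddCube_lower d n
      have : (0 : ℕ) < OddCube (d + 1) n := lt_of_lt_of_le (Nat.pow_pos two_pos) hl
      exact_mod_cast this
    have l2 : Real.logb 2 (OddCube (d + 1) n) ≤ ((((n + 1) / 2 + 1) * n ^ d : ℕ) : ℝ) := by
      have := Real.logb_le_logb_of_le (by norm_num : (1:ℝ) < 2) hNpos hN2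
      rwa [logb_two_pow] at this
    have key : ((((n + 1) / 2 + 1) * n ^ d : ℕ) : ℝ) / (n : ℝ) ^ (d + 1)
        ≤ (1 : ℝ) / 2 + 2 / (n : ℝ) := by
      have hr : 2 * (((n + 1) / 2 + 1 : ℕ) : ℝ) ≤ (n : ℝ) + 3 := by
        exact_mod_cast (by omega : 2 * ((n + 1) / 2 + 1) ≤ n + 3)
      have hpd : (0 : ℝ) < (n : ℝ) ^ d := pow_pos hn0 d
      push_cast
      push_cast at hr
      rw [pow_succ]
      have e : (((n + 1) / 2 + 1 : ℕ) : ℝ) * (n : ℝ) ^ d / ((n : ℝ) ^ d * n)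
          = (((n + 1) / 2 + 1 : ℕ) : ℝ) / n := by
        rw [mul_comm (((n + 1) / 2 + 1 : ℕ) : ℝ) ((n : ℝ) ^ d)]
        exact mul_div_mul_left _ _ (ne_of_gt hpd)
      push_cast at e
      rw [e, div_le_iff₀ hn0]
      have h2n : (2 / (n : ℝ)) * n = 2 := by field_simp
      nlinarith
    calc Real.logb 2 (OddCube (d + 1) n) / (n : ℝ) ^ (d + 1)
        ≤ ((((n + 1) / 2 + 1) * n ^ d : ℕ) : ℝ) / (n : ℝ) ^ (d + 1) := by
          gcongr
      _ ≤ (1 : ℝ) / 2 + 2 / (n : ℝ) := key
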